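/- If the sequence {M u_{[k−n,k]}}_{k=n}^{N−1} is persistently exciting of order 1, then for every initial state x_0 ∈ ℝ^n, the output sequence {y_k}_{k=0}^{N−1} generated by the system from x_0 under input {u_k}_{k=0}^{N−1} is persistently exciting of order 1. -/
import Mathlib


open Matrix Finset

noncomputable def stateSeq {n m : ℕ} (A : Matrix (Fin n) (Fin n) ℝ) (B : Matrix (Fin n) (Fin m) ℝ)
    (x0 : Fin n → ℝ) (u : ℕ → Fin m → ℝ) : ℕ → Fin n → ℝ
  | 0 => x0
  | k + 1 => A.mulVec (stateSeq A B x0 u k) + B.mulVec (u k)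

/-- Output sequence `y_k = C x_k + D u_k` of the LTI system started at `x0` with input `u`. -/
noncomputable def outputSeq {n m p : ℕ} (A : Matrix (Fin n) (Fin n) ℝ) (B : Matrix (Fin n) (Fin m) ℝ)
    (C : Matrix (Fin p) (Fin n) ℝ) (D : Matrix (Fin p) (Fin m) ℝ)
    (x0 : Fin n → ℝ) (u : ℕ → Fin m → ℝ) (k : ℕ) : Fin p → ℝ :=
  C.mulVec (stateSeq A B x0 u k) + D.mulVec (u k)

/-- Markov parameters: `Γ_0 = D`, `Γ_j = C A^(j-1) B` for `j ≥ 1`. -/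
noncomputable def Markov {n m p : ℕ} (A : Matrix (Fin n) (Fin n) ℝ) (B : Matrix (Fin n) (Fin m) ℝ)
    (C : Matrix (Fin p) (Fin n) ℝ) (D : Matrix (Fin p) (Fin m) ℝ) : ℕ → Matrix (Fin p) (Fin m) ℝ
  | 0 => D
  | j + 1 => C * A ^ j * B

/-- The matrix `M = [M_n ⋯ M_1 M_0]` with `M_j = ∑_{q=0}^j d_{j-q} Γ_q`; the block at
block-column `i` (from the left, `i = 0,…,n`) is `M_{n-i}`. -/
noncomputable def Mmat {n m p : ℕ} (A : Matrix (Fin n) (Fin n) ℝ) (B : Matrix (Fin n) (Fin m) ℝ)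
    (C : Matrix (Fin p) (Fin n) ℝ) (D : Matrix (Fin p) (Fin m) ℝ) (d : ℕ → ℝ) :
    Matrix (Fin p) (Fin (n + 1) × Fin m) ℝ :=
  Matrix.of fun i jl =>
    (∑ q ∈ Finset.range ((n - (jl.1 : ℕ)) + 1),
      d ((n - (jl.1 : ℕ)) - q) • Markov A B C D q) i jl.2

lemma sum_mulVec' {a b : ℕ} {ι : Type*} (s : Finset ι) (M : ι → Matrix (Fin a) (Fin b) ℝ) (v : Fin b → ℝ) :
    (∑ i ∈ s, M i).mulVec v = ∑ i ∈ s, (M i).mulVec v := by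
  ext j
  simp only [Matrix.mulVec, dotProduct, Matrix.sum_apply, Finset.sum_apply, Finset.sum_mul]
  rw [Finset.sum_comm]

lemma mulVec_sum' {a b : ℕ} {ι : Type*} (s : Finset ι) (M : Matrix (Fin a) (Fin b) ℝ) (v : ι → Fin b → ℝ) :
    M.mulVec (∑ i ∈ s, v i) = ∑ i ∈ s, M.mulVec (v i) := by
  simp only [← Matrix.mulVecLin_apply]
  exact map_sum _ _ _

lemma sum_range_ite' {M : Type*} [AddCommMonoid M] (k K : ℕ) (h : k ≤ K) (g : ℕ → M) :
    ∑ s ∈ range k, g s = ∑ s ∈ range K, if s < k then g s else 0 := by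
  calc ∑ s ∈ range k, g s
      = ∑ s ∈ range k, (if s < k then g s else 0) :=
        Finset.sum_congr rfl (fun s hs => (if_pos (mem_range.mp hs)).symm)
    _ = ∑ s ∈ range K, (if s < k then g s else 0) :=
        Finset.sum_subset (Finset.range_subset_range.mpr h)
          (fun x _ hx => if_neg (by simpa using hx))

lemma sum_triangle {M : Type*} [AddCommMonoid M] (n : ℕ) (f : ℕ → ℕ → M) :
    ∑ q ∈ range (n+1), ∑ s ∈ range (n - q), f q s
      = ∑ s ∈ range (n+1), ∑ q ∈ range (n - s), f q s := by
  rw [Finset.sum_congr rfl (fun q _ => sum_range_ite' (n - q) (n+1) (by omega) (f q))]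
  rw [Finset.sum_comm]
  refine Finset.sum_congr rfl (fun s _ => ?_)
  rw [sum_range_ite' (n - s) (n+1) (by omega) (fun q => f q s)]
  exact Finset.sum_congr rfl (fun q _ => if_congr (by omega) rfl rfl)

lemma stateSeq_formula {n m : ℕ} (A : Matrix (Fin n) (Fin n) ℝ) (B : Matrix (Fin n) (Fin m) ℝ)
    (x0 : Fin n → ℝ) (u : ℕ → Fin m → ℝ) (k t : ℕ) :
    stateSeq A B x0 u (k + t) = (A ^ t).mulVec (stateSeq A B x0 u k)
      + ∑ s ∈ Finset.range t, ((A ^ (t - 1 - s)) * B).mulVec (u (k + s)) := by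
  induction t with
  | zero => simp [Matrix.one_mulVec]
  | succ t ih =>
    have e : k + (t + 1) = (k + t) + 1 := by omega
    rw [e]
    show A.mulVec (stateSeq A B x0 u (k + t)) + B.mulVec (u (k + t)) = _
    rw [ih, Matrix.mulVec_add, Matrix.mulVec_mulVec, ← pow_succ', mulVec_sum',
      Finset.sum_range_succ]
    have e2 : t + 1 - 1 - t = 0 := by omega
    rw [e2, pow_zero, Matrix.one_mul]
    rw [Finset.sum_congr rfl (fun s hs => ?_)]
    · abel
    · rw [Matrix.mulVec_mulVec, ← Matrix.mul_assoc, ← pow_succ']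
      have : t - 1 - s + 1 = t + 1 - 1 - s := by
        have := Finset.mem_range.mp hs; omega
      rw [this]

lemma key {n m p : ℕ} (A : Matrix (Fin n) (Fin n) ℝ) (B : Matrix (Fin n) (Fin m) ℝ)
    (C : Matrix (Fin p) (Fin n) ℝ) (D : Matrix (Fin p) (Fin m) ℝ)
    (d : ℕ → ℝ)
    (hCayley : ∑ j ∈ Finset.range (n + 1), d j • A ^ (n - j) = 0)
    (x0 : Fin n → ℝ) (u : ℕ → Fin m → ℝ) (k : ℕ) :
    ∑ q ∈ range (n+1), d q • outputSeq A B C D x0 u (k + (n - q))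
      = (Mmat A B C D d).mulVec (fun il : Fin (n+1) × Fin m => u (k + (il.1 : ℕ)) il.2) := by
  have stepA : (Mmat A B C D d).mulVec (fun il : Fin (n+1) × Fin m => u (k + (il.1 : ℕ)) il.2)
      = ∑ j ∈ range (n+1),
          (∑ q ∈ range (j+1), d (j - q) • Markov A B C D q).mulVec (u (k + (n - j))) := by
    funext i
    have h1 : (Mmat A B C D d).mulVec (fun il : Fin (n+1) × Fin m => u (k + (il.1 : ℕ)) il.2) i
        = ∑ i' : Fin (n+1),
            ((∑ q ∈ range ((n - (i' : ℕ)) + 1), d ((n - (i' : ℕ)) - q) • Markov A B C D q).mulVec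
              (u (k + (i' : ℕ)))) i := by
      simp only [Matrix.mulVec, dotProduct, Fintype.sum_prod_type, Mmat, Matrix.of_apply]
    rw [h1, Fin.sum_univ_eq_sum_range (fun j =>
      ((∑ q ∈ range ((n - j) + 1), d ((n - j) - q) • Markov A B C D q).mulVec (u (k + j))) i)]
    rw [← Finset.sum_range_reflect (fun j =>
      ((∑ q ∈ range ((n - j) + 1), d ((n - j) - q) • Markov A B C D q).mulVec (u (k + j))) i) (n+1)]
    rw [Finset.sum_apply]
    refine Finset.sum_congr rfl (fun j hj => ?_)
    have hje := Finset.mem_range.mp hj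
    have e1 : n + 1 - 1 - j = n - j := by omega
    have e2 : n - (n - j) = j := by omega
    rw [e1, e2]
  rw [stepA]
  -- expand LHS
  have expand : ∀ q ∈ range (n+1),
      d q • outputSeq A B C D x0 u (k + (n - q))
        = d q • (C * A ^ (n - q)).mulVec (stateSeq A B x0 u k)
          + ((∑ s ∈ range (n - q), d q • (C * (A ^ (n - q - 1 - s) * B)).mulVec (u (k + s)))
          + d q • D.mulVec (u (k + (n - q)))) := by
    intro q _
    rw [outputSeq, stateSeq_formula A B x0 u k (n - q)]
    simp only [Matrix.mulVec_add, mulVec_sum', Matrix.mulVec_mulVec, smul_add,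
      Finset.smul_sum, add_assoc]
  rw [Finset.sum_congr rfl expand, Finset.sum_add_distrib, Finset.sum_add_distrib]
  -- T1 = 0
  have hT1 : ∑ q ∈ range (n+1), d q • (C * A ^ (n - q)).mulVec (stateSeq A B x0 u k) = 0 := by
    have : ∀ q ∈ range (n+1), d q • (C * A ^ (n - q)).mulVec (stateSeq A B x0 u k)
        = (d q • (C * A ^ (n - q))).mulVec (stateSeq A B x0 u k) := by
      intro q _; rw [Matrix.smul_mulVec]
    rw [Finset.sum_congr rfl this, ← sum_mulVec']
    have : ∑ q ∈ range (n+1), d q • (C * A ^ (n - q)) = 0 := by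
      have h2 : ∀ q ∈ range (n+1), d q • (C * A ^ (n - q)) = C * (d q • A ^ (n - q)) := by
        intro q _; rw [Matrix.mul_smul]
      rw [Finset.sum_congr rfl h2]
      have h3 : ∑ q ∈ range (n+1), C * (d q • A ^ (n - q))
          = C * ∑ q ∈ range (n+1), d q • A ^ (n - q) := (Matrix.mul_sum _ _ _).symm
      rw [h3, hCayley, Matrix.mul_zero]
    rw [this, Matrix.zero_mulVec]
  rw [hT1, zero_add]
  -- expand RHS
  have expandR : ∀ j ∈ range (n+1),
      (∑ q ∈ range (j+1), d (j - q) • Markov A B C D q).mulVec (u (k + (n - j)))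
        = (∑ q ∈ range j, d (j - 1 - q) • (C * (A ^ q * B)).mulVec (u (k + (n - j))))
          + d j • D.mulVec (u (k + (n - j))) := by
    intro j _
    rw [sum_mulVec', Finset.sum_range_succ']
    congr 1
    · refine Finset.sum_congr rfl (fun q _ => ?_)
      rw [Matrix.smul_mulVec]
      have : j - (q + 1) = j - 1 - q := by omega
      rw [this]
      congr 1
      show (Markov A B C D (q+1)).mulVec _ = _
      rw [show Markov A B C D (q+1) = C * A ^ q * B from rfl, Matrix.mul_assoc]
    · rw [Matrix.smul_mulVec]
      show _ = d (j - 0) • (Markov A B C D 0).mulVec (u (k + (n - j)))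
      rfl
  rw [Finset.sum_congr rfl expandR, Finset.sum_add_distrib]
  congr 1
  -- the double sums
  rw [sum_triangle n (fun q s => d q • (C * (A ^ (n - q - 1 - s) * B)).mulVec (u (k + s)))]
  rw [← Finset.sum_range_reflect (fun j =>
    ∑ q ∈ range j, d (j - 1 - q) • (C * (A ^ q * B)).mulVec (u (k + (n - j)))) (n+1)]
  refine Finset.sum_congr rfl (fun s hs => ?_)
  have hsn := Finset.mem_range.mp hs
  have e1 : n + 1 - 1 - s = n - s := by omega
  have e2 : n - (n - s) = s := by omega
  rw [e1, e2]
  rw [← Finset.sum_range_reflect (fun q =>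
    d (n - s - 1 - q) • (C * (A ^ q * B)).mulVec (u (k + s))) (n - s)]
  refine Finset.sum_congr rfl (fun q hq => ?_)
  have hqn := Finset.mem_range.mp hq
  have e3 : n - s - 1 - (n - s - 1 - q) = q := by omega
  have e4 : n - q - 1 - s = n - s - 1 - q := by omega
  rw [e4, e3]

/-- if `{M u_{[k-n,k]}}_{k=n}^{N-1}` is PE of order 1 (full row rank `p` of the
matrix with those columns), then for every initial state the output sequence
`{y_k}_{k=0}^{N-1}` is PE of order 1. -/
theorem stmt_3 {n m p : ℕ} (hn : 0 < n) (hm : 0 < m) (hp : 0 < p)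
    (A : Matrix (Fin n) (Fin n) ℝ) (B : Matrix (Fin n) (Fin m) ℝ)
    (C : Matrix (Fin p) (Fin n) ℝ) (D : Matrix (Fin p) (Fin m) ℝ)
    (d : ℕ → ℝ) (hd0 : d 0 ≠ 0)
    (hdnorm : ∑ j ∈ Finset.range (n + 1), d j ^ 2 = 1)
    (hCayley : ∑ j ∈ Finset.range (n + 1), d j • A ^ (n - j) = 0)
    (N : ℕ) (hN : n < N) (u : ℕ → Fin m → ℝ)
    (hPE : (Matrix.of fun (i : Fin p) (k : Fin (N - n)) =>
        (Mmat A B C D d).mulVec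
          (fun il : Fin (n + 1) × Fin m => u ((k : ℕ) + (il.1 : ℕ)) il.2) i).rank = p) :
    ∀ x0 : Fin n → ℝ,
      (Matrix.of fun (i : Fin p) (k : Fin N) => outputSeq A B C D x0 u (k : ℕ) i).rank = p := by
  intro x0
  refine le_antisymm ?_ ?_
  · simpa using Matrix.rank_le_card_height
      (Matrix.of fun (i : Fin p) (k : Fin N) => outputSeq A B C D x0 u (k : ℕ) i)
  · set T : Matrix (Fin N) (Fin (N - n)) ℝ := Matrix.of fun j k =>
      ∑ q ∈ Finset.range (n + 1),
        if j = (⟨(k : ℕ) + (n - q), by have := k.isLt; omega⟩ : Fin N) then d q else 0 with hT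
    have hfac : (Matrix.of fun (i : Fin p) (k : Fin (N - n)) =>
        (Mmat A B C D d).mulVec
          (fun il : Fin (n + 1) × Fin m => u ((k : ℕ) + (il.1 : ℕ)) il.2) i)
        = (Matrix.of fun (i : Fin p) (j : Fin N) => outputSeq A B C D x0 u (j : ℕ) i) * T := by
      ext i k
      rw [Matrix.mul_apply]
      simp only [Matrix.of_apply, hT]
      rw [← key A B C D d hCayley x0 u (k : ℕ), Finset.sum_apply]
      have step1 : ∀ j : Fin N,
          outputSeq A B C D x0 u (j : ℕ) i *
            (∑ q ∈ Finset.range (n + 1),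
              if j = (⟨(k : ℕ) + (n - q), by have := k.isLt; omega⟩ : Fin N) then d q else 0)
          = ∑ q ∈ Finset.range (n + 1),
              if j = (⟨(k : ℕ) + (n - q), by have := k.isLt; omega⟩ : Fin N) then
                outputSeq A B C D x0 u (j : ℕ) i * d q else 0 := by
        intro j
        rw [Finset.mul_sum]
        exact Finset.sum_congr rfl (fun q _ => by rw [mul_ite, mul_zero])
      rw [Finset.sum_congr rfl (fun j _ => step1 j), Finset.sum_comm]
      refine Finset.sum_congr rfl (fun q _ => ?_)
      rw [Finset.sum_ite_eq' Finset.univ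
        (⟨(k : ℕ) + (n - q), by have := k.isLt; omega⟩ : Fin N)
        (fun j => outputSeq A B C D x0 u (j : ℕ) i * d q)]
      simp [mul_comm]
    calc p = (Matrix.of fun (i : Fin p) (k : Fin (N - n)) =>
          (Mmat A B C D d).mulVec
            (fun il : Fin (n + 1) × Fin m => u ((k : ℕ) + (il.1 : ℕ)) il.2) i).rank := hPE.symm
      _ ≤ _ := by rw [hfac]; exact Matrix.rank_mul_le_left _ _
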